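/- Let {E_n} be positive reals satisfying E_{n+1} = E_n E_{n−1} m_n with m_n > 0 and lim m_n = m_α > 0, and suppose E_n → 0 with E_0, E_1 ∈ (0,1). Then lim_{n→∞} E_{n+1}/E_n^{r₀} = m_α^{r₀−1}, where r₀ = (1+√5)/2. -/

import Mathlib

open Filter Topology

lemma aux_contract (y e : ℕ → ℝ) (q : ℝ) (hq0 : 0 < q) (hq1 : q < 1)
    (h : ∀ n, |y (n + 1)| ≤ q * |y n| + |e n|) (he : Tendsto e atTop (𝓝 0)) :
    Tendsto y atTop (𝓝 0) := by
  rw [Metric.tendsto_atTop] at he ⊢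
  intro δ hδ
  obtain ⟨N, hN⟩ := he (δ * (1 - q) / 2) (by nlinarith)
  have hbound : ∀ k, |y (N + k)| ≤ q ^ k * |y N| + δ / 2 := by
    intro k
    induction k with
    | zero => simp; nlinarith
    | succ k ih =>
      have h1 := h (N + k)
      have h2 := hN (N + k) (Nat.le_add_right _ _)
      rw [Real.dist_0_eq_abs] at h2
      have habs : (0:ℝ) ≤ |y N| := abs_nonneg _
      have hqk : (0:ℝ) ≤ q ^ k := by positivity
      have : |y (N + (k + 1))| ≤ q * (q ^ k * |y N| + δ / 2) + δ * (1 - q) / 2 := by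
        have : N + (k + 1) = (N + k) + 1 := by ring
        rw [this]
        nlinarith [abs_nonneg (y (N + k))]
      calc |y (N + (k + 1))| ≤ q * (q ^ k * |y N| + δ / 2) + δ * (1 - q) / 2 := this
        _ = q ^ (k + 1) * |y N| + δ / 2 := by ring
  have hpow : Tendsto (fun k => q ^ k * |y N|) atTop (𝓝 0) := by
    have := tendsto_pow_atTop_nhds_zero_of_lt_one hq0.le hq1
    simpa using this.mul_const |y N|
  rw [Metric.tendsto_atTop] at hpow
  obtain ⟨K, hK⟩ := hpow (δ / 2) (by positivity)
  refine ⟨N + K, fun n hn => ?_⟩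
  have hk : n = N + (n - N) := by omega
  have hKle : K ≤ n - N := by omega
  have hb := hbound (n - N)
  have hK' := hK (n - N) hKle
  rw [Real.dist_0_eq_abs] at hK' ⊢
  have hK'' : q ^ (n - N) * |y N| < δ / 2 := (le_abs_self _).trans_lt hK'
  rw [hk]
  linarith

theorem secant_error_qorder (E m : ℕ → ℝ) (mα : ℝ)
    (hE : ∀ n, 0 < E n) (hm : ∀ n, 0 < m n)
    (hrec : ∀ n, E (n + 2) = E (n + 1) * E n * m n)
    (hmlim : Tendsto m atTop (𝓝 mα)) (hmα : 0 < mα)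
    (hElim : Tendsto E atTop (𝓝 0))
    (hE0 : E 0 ∈ Set.Ioo (0 : ℝ) 1) (hE1 : E 1 ∈ Set.Ioo (0 : ℝ) 1) :
    Tendsto (fun n => E (n + 1) / E n ^ ((1 + Real.sqrt 5) / 2)) atTop
      (𝓝 (mα ^ ((1 + Real.sqrt 5) / 2 - 1))) := by
  set r : ℝ := (1 + Real.sqrt 5) / 2 with hr
  have hs5 : Real.sqrt 5 ^ 2 = 5 := Real.sq_sqrt (by norm_num)
  have hs5pos : 1 < Real.sqrt 5 := by
    nlinarith [Real.sqrt_nonneg 5]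
  have hs5lt : Real.sqrt 5 < 3 := by
    nlinarith [Real.sqrt_nonneg 5]
  have hr1 : 1 < r := by rw [hr]; linarith
  have hr2 : r * r = r + 1 := by rw [hr]; nlinarith
  set μα : ℝ := Real.log mα with hμ
  set y : ℕ → ℝ := fun n => Real.log (E (n + 1)) - r * Real.log (E n) - (r - 1) * μα with hy
  set e : ℕ → ℝ := fun n => Real.log (m n) - μα with hedef
  have he : Tendsto e atTop (𝓝 0) := by
    have := (hmlim.log hmα.ne').sub_const μα
    simpa [hedef, hμ] using this
  have hkey : ∀ n, y (n + 1) = (1 - r) * y n + e n := by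
    intro n
    have hlog : Real.log (E (n + 2)) = Real.log (E (n + 1)) + Real.log (E n) + Real.log (m n) := by
      rw [hrec n, Real.log_mul (mul_pos (hE _) (hE _)).ne' (hm n).ne', Real.log_mul (hE _).ne' (hE _).ne']
    simp only [hy, hedef]
    rw [show n + 1 + 1 = n + 2 from rfl, hlog]
    linear_combination (-(Real.log (E n)) - μα) * hr2
  have hy0 : Tendsto y atTop (𝓝 0) := by
    apply aux_contract y e (r - 1) (by linarith) (by linarith)
    · intro n
      rw [hkey n]
      calc |(1 - r) * y n + e n| ≤ |(1 - r) * y n| + |e n| := abs_add_le _ _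
        _ = (r - 1) * |y n| + |e n| := by
            rw [abs_mul, abs_of_nonpos (by linarith : (1:ℝ) - r ≤ 0)]; ring_nf
    · exact he
  have hconv : Tendsto (fun n => Real.log (E (n + 1)) - r * Real.log (E n)) atTop (𝓝 ((r - 1) * μα)) := by
    have := hy0.add_const ((r - 1) * μα)
    simp only [hy] at this
    simpa using this
  have hexp := (Real.continuous_exp.tendsto _).comp hconv
  have heq : (fun n => E (n + 1) / E n ^ r) =
      fun n => Real.exp (Real.log (E (n + 1)) - r * Real.log (E n)) := by
    funext n
    rw [Real.exp_sub, Real.exp_log (hE _), Real.rpow_def_of_pos (hE n), mul_comm]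
  have htgt : mα ^ (r - 1) = Real.exp ((r - 1) * μα) := by
    rw [Real.rpow_def_of_pos hmα, hμ, mul_comm]
  rw [heq, htgt]
  exact hexp
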